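/- Let (U(t))_{t∈ℝ} be a strongly continuous unitary one-parameter group on a complex Hilbert space 𝓗. Let Φ(t), B(t), B₁(t), …, B_n(t) (t ≥ 1) be families of bounded operators on 𝓗 such that each Φ(t) is self-adjoint, sup_{t≥1} ‖Φ(t)‖ < ∞, and t ↦ B(t)ψ and t ↦ B_i(t)ψ are continuous for every ψ. Assume there is C₀ > 0 such that for every φ ∈ 𝓗 the function t ↦ ⟨U(t)φ, Φ(t)U(t)φ⟩ is differentiable on [1,∞) with derivative at each t ≥ 1 at least C₀‖B(t)U(t)φ‖² − Σ_{i=1}^n ‖B_i(t)U(t)φ‖², and assume there is C > 0 such that ∫₁^∞ ‖B_i(t)U(t)φ‖² dt ≤ C‖φ‖² for all φ ∈ 𝓗 and all i = 1,…,n. Then there exists C₁ > 0 such that ∫₁^∞ ‖B(t)U(t)φ‖² dt ≤ C₁‖φ‖² for all φ ∈ 𝓗. -/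

import Mathlib

open scoped InnerProductSpace
open MeasureTheory Filter

section auxx
variable {H : Type*} [NormedAddCommGroup H] [InnerProductSpace ℂ H] [CompleteSpace H]

lemma aux_joint_cont (B : ℝ → H →L[ℂ] H)
    (hB : ∀ ψ : H, ContinuousOn (fun t => B t ψ) (Set.Ici (1:ℝ)))
    (u : ℝ → H) (hu : Continuous u) (T : ℝ) :
    ContinuousOn (fun t => B t (u t)) (Set.Icc (1:ℝ) T) := by
  obtain ⟨M, hMb⟩ : ∃ M, ∀ t : Set.Icc (1:ℝ) T, ‖B t‖ ≤ M := by
    apply banach_steinhaus (g := fun t : Set.Icc (1:ℝ) T => B t)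
    intro x
    obtain ⟨Cx, hCx⟩ := IsCompact.exists_bound_of_continuousOn isCompact_Icc
      ((hB x).mono Set.Icc_subset_Ici_self)
    exact ⟨Cx, fun t => hCx t t.2⟩
  intro s hs
  have h1 : Tendsto (fun t => B t (u s)) (nhdsWithin s (Set.Icc (1:ℝ) T)) (nhds (B s (u s))) :=
    ((hB (u s)).mono Set.Icc_subset_Ici_self) s hs
  have h2 : Tendsto (fun t => B t (u t) - B t (u s))
      (nhdsWithin s (Set.Icc (1:ℝ) T)) (nhds 0) := by
    apply squeeze_zero_norm' (a := fun t => M * ‖u t - u s‖)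
    · filter_upwards [self_mem_nhdsWithin] with t ht
      calc ‖B t (u t) - B t (u s)‖ = ‖B t (u t - u s)‖ := by rw [map_sub]
        _ ≤ ‖B t‖ * ‖u t - u s‖ := (B t).le_opNorm _
        _ ≤ M * ‖u t - u s‖ := by
            have h : ‖B t‖ ≤ M := hMb ⟨t, ht⟩
            exact mul_le_mul_of_nonneg_right h (norm_nonneg _)
    · have h : Tendsto (fun t => M * ‖u t - u s‖) (nhds s) (nhds (M * ‖u s - u s‖)) :=
        tendsto_const_nhds.mul ((hu.tendsto s).sub tendsto_const_nhds).norm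
      simpa using h.mono_left nhdsWithin_le_nhds
  have h3 := h2.add h1
  simp only [sub_add_cancel, zero_add] at h3
  exact h3

end auxx

theorem stmt_2 {H : Type*} [NormedAddCommGroup H] [InnerProductSpace ℂ H] [CompleteSpace H]
    (U : ℝ → H →L[ℂ] H)
    (hU0 : U 0 = 1)
    (hUadd : ∀ s t : ℝ, U (s + t) = (U s).comp (U t))
    (hUiso : ∀ (t : ℝ) (ψ : H), ‖U t ψ‖ = ‖ψ‖)
    (hUcont : ∀ ψ : H, Continuous fun t => U t ψ)
    (n : ℕ) (Φ B : ℝ → H →L[ℂ] H) (Bi : Fin n → ℝ → H →L[ℂ] H)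
    (hΦsa : ∀ t : ℝ, 1 ≤ t → IsSelfAdjoint (Φ t))
    (hΦbdd : ∃ M : ℝ, ∀ t : ℝ, 1 ≤ t → ‖Φ t‖ ≤ M)
    (hBcont : ∀ ψ : H, ContinuousOn (fun t => B t ψ) (Set.Ici 1))
    (hBicont : ∀ (i : Fin n) (ψ : H), ContinuousOn (fun t => Bi i t ψ) (Set.Ici 1))
    (C₀ : ℝ) (hC₀ : 0 < C₀)
    (hderiv : ∀ (φ : H) (t : ℝ), 1 ≤ t → ∃ d : ℝ,
      HasDerivWithinAt (fun s : ℝ => (⟪U s φ, Φ s (U s φ)⟫_ℂ).re) d (Set.Ici 1) t ∧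
        C₀ * ‖B t (U t φ)‖ ^ 2 - ∑ i : Fin n, ‖Bi i t (U t φ)‖ ^ 2 ≤ d)
    (C : ℝ) (hC : 0 < C)
    (hint : ∀ (i : Fin n) (φ : H),
      ∫⁻ t in Set.Ioi (1 : ℝ), ENNReal.ofReal (‖Bi i t (U t φ)‖ ^ 2) ≤
        ENNReal.ofReal (C * ‖φ‖ ^ 2)) :
    ∃ C₁ : ℝ, 0 < C₁ ∧ ∀ φ : H,
      ∫⁻ t in Set.Ioi (1 : ℝ), ENNReal.ofReal (‖B t (U t φ)‖ ^ 2) ≤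
        ENNReal.ofReal (C₁ * ‖φ‖ ^ 2) := by
  classical
  obtain ⟨M, hM⟩ := hΦbdd
  have hM0 : 0 ≤ M := le_trans (norm_nonneg _) (hM 1 le_rfl)
  have hn0 : (0:ℝ) ≤ (n:ℝ) := Nat.cast_nonneg n
  have hC₁pos : 0 < (2*M + ((n:ℝ)*C + C))/C₀ := by
    apply div_pos _ hC₀
    nlinarith
  refine ⟨(2*M + ((n:ℝ)*C + C))/C₀, hC₁pos, fun φ => ?_⟩
  set g : ℝ → ℝ := fun t => ‖B t (U t φ)‖ ^ 2 with hg
  set hI : Fin n → ℝ → ℝ := fun i t => ‖Bi i t (U t φ)‖ ^ 2 with hhI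
  have hgc : ∀ S : ℝ, ContinuousOn g (Set.Icc 1 S) := fun S =>
    ((aux_joint_cont B hBcont _ (hUcont φ) S).norm.pow 2)
  have hic : ∀ (i : Fin n) (S : ℝ), ContinuousOn (hI i) (Set.Icc 1 S) := fun i S =>
    ((aux_joint_cont (Bi i) (hBicont i) _ (hUcont φ) S).norm.pow 2)
  set w : ℝ → ℝ := fun t => C₀ * g t - ∑ i : Fin n, hI i t with hw
  have hwc : ∀ S : ℝ, ContinuousOn w (Set.Icc 1 S) := fun S =>
    (continuousOn_const.mul (hgc S)).sub
      (continuousOn_finset_sum Finset.univ (fun i _ => hic i S))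
  set f : ℝ → ℝ := fun x => (⟪U x φ, Φ x (U x φ)⟫_ℂ).re with hf
  have hfd : ∀ x : ℝ, 1 ≤ x → ∃ d : ℝ,
      HasDerivWithinAt f d (Set.Ici 1) x ∧ w x ≤ d := hderiv φ
  have hfb : ∀ x : ℝ, 1 ≤ x → |f x| ≤ M * ‖φ‖ ^ 2 := by
    intro x hx
    have h1 : |f x| ≤ ‖⟪U x φ, Φ x (U x φ)⟫_ℂ‖ := Complex.abs_re_le_norm _
    have h2 : ‖⟪U x φ, Φ x (U x φ)⟫_ℂ‖ ≤ ‖U x φ‖ * ‖Φ x (U x φ)‖ := norm_inner_le_norm _ _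
    have h3 : ‖Φ x (U x φ)‖ ≤ ‖Φ x‖ * ‖U x φ‖ := (Φ x).le_opNorm _
    have h4 : ‖Φ x‖ ≤ M := hM x hx
    have h5 : ‖U x φ‖ = ‖φ‖ := hUiso x φ
    rw [h5] at h2 h3
    nlinarith [norm_nonneg φ, norm_nonneg (Φ x (U x φ)), norm_nonneg (Φ x)]
  set F : ℝ → ℝ := fun x => ∫ s in (1:ℝ)..x, w s with hF
  -- key real estimate
  have key : ∀ T : ℝ, 1 ≤ T →
      C₀ * (∫ s in (1:ℝ)..T, g s) ≤ (2*M + (n:ℝ)*C) * ‖φ‖ ^ 2 := by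
    intro T hT
    have hFc : ContinuousOn F (Set.Icc 1 (T+1)) := by
      have hInt : IntegrableOn w (Set.uIcc (1:ℝ) (T+1)) := by
        rw [Set.uIcc_of_le (by linarith)]
        exact (hwc (T+1)).integrableOn_compact isCompact_Icc
      have := intervalIntegral.continuousOn_primitive_interval hInt
      rwa [Set.uIcc_of_le (by linarith)] at this
    have hder : ∀ x ∈ Set.Ioo (1:ℝ) (T+1), ∃ d : ℝ,
        HasDerivAt (fun y => f y - F y) (d - w x) x ∧ 0 ≤ d - w x := by
      intro x hx
      obtain ⟨d, hd, hdge⟩ := hfd x hx.1.le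
      have hf' : HasDerivAt f d x := hd.hasDerivAt (Ici_mem_nhds hx.1)
      have hF' : HasDerivAt F (w x) x := by
        apply intervalIntegral.integral_hasDerivAt_right
        · have : ContinuousOn w (Set.uIcc (1:ℝ) x) := by
            rw [Set.uIcc_of_le hx.1.le]; exact hwc x
          exact this.intervalIntegrable
        · exact ((hwc (T+1)).mono Set.Ioo_subset_Icc_self).stronglyMeasurableAtFilter
            isOpen_Ioo x hx
        · exact (hwc (T+1)).continuousAt (Icc_mem_nhds (by linarith [hx.1]) (by linarith [hx.2]))
      exact ⟨d, hf'.sub hF', by linarith⟩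
    have hmono : MonotoneOn (fun x => f x - F x) (Set.Icc 1 (T+1)) := by
      apply monotoneOn_of_deriv_nonneg (convex_Icc _ _)
      · apply ContinuousOn.sub _ hFc
        intro x hx
        exact ((hfd x hx.1).choose_spec.1.continuousWithinAt).mono Set.Icc_subset_Ici_self
      · rw [interior_Icc]
        intro x hx
        obtain ⟨d, hd, _⟩ := hder x hx
        exact hd.differentiableAt.differentiableWithinAt
      · rw [interior_Icc]
        intro x hx
        obtain ⟨d, hd, hge⟩ := hder x hx
        rw [hd.deriv]; exact hge
    have hmT : F T ≤ f T - f 1 := by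
      have h0 := hmono (Set.mem_Icc.2 ⟨le_refl 1, by linarith⟩)
        (Set.mem_Icc.2 ⟨hT, by linarith⟩) hT
      have hF1 : F 1 = 0 := intervalIntegral.integral_same
      simp only [hF1] at h0
      linarith
    have hgint : IntervalIntegrable g volume 1 T := by
      have : ContinuousOn g (Set.uIcc (1:ℝ) T) := by
        rw [Set.uIcc_of_le hT]; exact hgc T
      exact this.intervalIntegrable
    have hiint : ∀ i : Fin n, IntervalIntegrable (hI i) volume 1 T := by
      intro i
      have : ContinuousOn (hI i) (Set.uIcc (1:ℝ) T) := by
        rw [Set.uIcc_of_le hT]; exact hic i T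
      exact this.intervalIntegrable
    have hFT : F T = C₀ * (∫ s in (1:ℝ)..T, g s) - ∑ i : Fin n, ∫ s in (1:ℝ)..T, hI i s := by
      have hsint : IntervalIntegrable (fun t => ∑ i : Fin n, hI i t) volume 1 T := by
        have hcs : ContinuousOn (fun t => ∑ i : Fin n, hI i t) (Set.uIcc (1:ℝ) T) := by
          rw [Set.uIcc_of_le hT]
          exact continuousOn_finset_sum Finset.univ (fun i _ => hic i T)
        exact hcs.intervalIntegrable
      have h1 : F T = (∫ s in (1:ℝ)..T, C₀ * g s) - ∫ s in (1:ℝ)..T, ∑ i : Fin n, hI i s :=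
        intervalIntegral.integral_sub (hgint.const_mul C₀) hsint
      rw [h1, intervalIntegral.integral_const_mul,
        intervalIntegral.integral_finset_sum (fun i _ => hiint i)]
    have hIb : ∀ i : Fin n, (∫ s in (1:ℝ)..T, hI i s) ≤ C * ‖φ‖ ^ 2 := by
      intro i
      rw [intervalIntegral.integral_of_le hT]
      have hIi_int : IntegrableOn (hI i) (Set.Ioc 1 T) :=
        ((hic i T).integrableOn_compact isCompact_Icc).mono_set Set.Ioc_subset_Icc_self
      have hnn : 0 ≤ᵐ[volume.restrict (Set.Ioc (1:ℝ) T)] hI i :=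
        Filter.Eventually.of_forall (fun t => by positivity)
      have heq := ofReal_integral_eq_lintegral_ofReal hIi_int hnn
      have hle : (∫⁻ t in Set.Ioc (1:ℝ) T, ENNReal.ofReal (hI i t)) ≤
          ENNReal.ofReal (C * ‖φ‖ ^ 2) :=
        le_trans (lintegral_mono_set Set.Ioc_subset_Ioi_self) (hint i φ)
      rw [← heq] at hle
      exact (ENNReal.ofReal_le_ofReal_iff (by positivity)).1 hle
    have hsum : (∑ i : Fin n, ∫ s in (1:ℝ)..T, hI i s) ≤ (n:ℝ) * (C * ‖φ‖ ^ 2) := by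
      calc (∑ i : Fin n, ∫ s in (1:ℝ)..T, hI i s) ≤ ∑ _i : Fin n, C * ‖φ‖ ^ 2 :=
            Finset.sum_le_sum (fun i _ => hIb i)
        _ = (n:ℝ) * (C * ‖φ‖ ^ 2) := by
            rw [Finset.sum_const, Finset.card_univ, Fintype.card_fin]; push_cast; ring
    have hfT := hfb T hT
    have hf1 := hfb 1 le_rfl
    have h2M : f T - f 1 ≤ 2 * M * ‖φ‖ ^ 2 := by
      rw [abs_le] at hfT hf1; linarith
    nlinarith [hFT, hmT]
  -- convert to lintegral over Ioc 1 T
  have each : ∀ T : ℝ, 1 ≤ T →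
      (∫⁻ t in Set.Ioc (1:ℝ) T, ENNReal.ofReal (g t)) ≤
        ENNReal.ofReal ((2*M + ((n:ℝ)*C + C))/C₀ * ‖φ‖ ^ 2) := by
    intro T hT
    have hgi : IntegrableOn g (Set.Ioc 1 T) :=
      ((hgc T).integrableOn_compact isCompact_Icc).mono_set Set.Ioc_subset_Icc_self
    have hnn : 0 ≤ᵐ[volume.restrict (Set.Ioc (1:ℝ) T)] g :=
      Filter.Eventually.of_forall (fun t => by positivity)
    rw [← ofReal_integral_eq_lintegral_ofReal hgi hnn]
    apply ENNReal.ofReal_le_ofReal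
    have h1 := key T hT
    rw [intervalIntegral.integral_of_le hT] at h1
    rw [div_mul_eq_mul_div, le_div_iff₀ hC₀]
    nlinarith [sq_nonneg ‖φ‖]
  -- decompose Ioi 1 into a union of Ioc intervals
  set s : ℕ → Set ℝ := fun k => Set.Ioc (1+(k:ℝ)) (2+(k:ℝ)) with hs
  have hsU : Set.Ioi (1:ℝ) = ⋃ k, s k := by
    ext x
    simp only [Set.mem_Ioi, Set.mem_iUnion, Set.mem_Ioc, hs]
    constructor
    · intro hx
      by_cases h2 : x ≤ 2
      · exact ⟨0, by push_cast; constructor <;> linarith⟩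
      · push_neg at h2
        refine ⟨⌈x - 2⌉₊, ?_, ?_⟩
        · have := Nat.ceil_lt_add_one (by linarith : (0:ℝ) ≤ x - 2)
          linarith
        · have := Nat.le_ceil (x - 2)
          linarith
    · rintro ⟨k, hk1, _⟩
      have : (0:ℝ) ≤ k := Nat.cast_nonneg k
      linarith
  have hdisj : Pairwise (Function.onFun Disjoint s) := by
    intro i j hij
    simp only [Function.onFun, hs, Set.Ioc_disjoint_Ioc]
    rcases hij.lt_or_gt with h | h
    · have hij' : (i:ℝ) + 1 ≤ (j:ℝ) := by exact_mod_cast h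
      exact le_trans (min_le_left _ _) (le_trans (by linarith) (le_max_right _ _))
    · have hij' : (j:ℝ) + 1 ≤ (i:ℝ) := by exact_mod_cast h
      exact le_trans (min_le_right _ _) (le_trans (by linarith) (le_max_left _ _))
  rw [hsU, lintegral_iUnion (fun k => measurableSet_Ioc) hdisj, ENNReal.tsum_eq_iSup_nat]
  apply iSup_le
  intro m
  have hpart : ∀ m : ℕ,
      (∑ k ∈ Finset.range m, ∫⁻ t in s k, ENNReal.ofReal (g t)) =
        ∫⁻ t in Set.Ioc (1:ℝ) (1+(m:ℝ)), ENNReal.ofReal (g t) := by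
    intro m
    induction m with
    | zero => simp
    | succ m ih =>
      have h1 : (1:ℝ) ≤ 1 + (m:ℝ) := le_add_of_nonneg_right (Nat.cast_nonneg m)
      have h2 : (1:ℝ) + (m:ℝ) ≤ 2 + (m:ℝ) := by linarith
      rw [Finset.sum_range_succ, ih]
      simp only [hs]
      push_cast
      rw [← lintegral_union measurableSet_Ioc (Set.Ioc_disjoint_Ioc_of_le le_rfl),
        Set.Ioc_union_Ioc_eq_Ioc h1 h2,
        show (1:ℝ) + ((m:ℝ)+1) = 2 + (m:ℝ) from by ring]
  rw [hpart m]
  exact each (1+(m:ℝ)) (le_add_of_nonneg_right (Nat.cast_nonneg m))
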